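/- Iterated truthful announcement need not stabilize other formulas on S5: there exist a pointed two-agent Kripke model (M,s) in which both accessibility relations are equivalence relations (S5) and announcement-free formulas φ and ψ such that, writing M|_{φ^0} = M and M|_{φ^{n+1}} = (M|_{φ^n})|_φ for the iterated state-elimination update by φ, for every n ≥ 0: the state s survives (s is a state of M|_{φ^n}) and M|_{φ^n}, s ⊨ φ (so every iterated announcement of φ is truthful at s), while M|_{φ^n}, s ⊨ ψ if and only if n is odd; that is, the truth value of ψ at s never stabilizes under iterated truthful announcement of φ. -/
import Mathlib


inductive Form (A : Type) : Type
  | atom : ℕ → Form A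
  | neg  : Form A → Form A
  | conj : Form A → Form A → Form A
  | box  : A → Form A → Form A
  | ann  : Form A → Form A → Form A
  deriving DecidableEq

namespace Form

/-- ◇_a φ := ¬□_a¬φ -/
def dia {A : Type} (a : A) (φ : Form A) : Form A := .neg (.box a (.neg φ))

/-- φ → ψ := ¬(φ ∧ ¬ψ) -/
def imp {A : Type} (φ ψ : Form A) : Form A := .neg (.conj φ (.neg ψ))

/-- φ ∨ ψ := ¬(¬φ ∧ ¬ψ) -/
def or {A : Type} (φ ψ : Form A) : Form A := .neg (.conj (.neg φ) (.neg ψ))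

/-- ⊥ := p ∧ ¬p -/
def bot {A : Type} : Form A := .conj (.atom 0) (.neg (.atom 0))

def top {A : Type} : Form A := .neg bot

def iff {A : Type} (φ ψ : Form A) : Form A := .conj (imp φ ψ) (imp ψ φ)

end Form

/-- A Kripke model over agents `A` with state set `S`. -/
structure Model (A S : Type) where
  R : A → S → S → Prop
  V : ℕ → S → Prop

/-- Arrow elimination: keep only arrows pointing to states satisfying `P`. -/
def Model.restrict {A S : Type} (M : Model A S) (P : S → Prop) : Model A S :=
  ⟨fun a s t => M.R a s t ∧ P t, M.V⟩

/-- Satisfaction, with believed announcements interpreted by arrow elimination. -/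
def Sat {A S : Type} : Model A S → Form A → S → Prop
  | M, .atom n, s => M.V n s
  | M, .neg φ, s => ¬ Sat M φ s
  | M, .conj φ ψ, s => Sat M φ s ∧ Sat M ψ s
  | M, .box a φ, s => ∀ t : S, M.R a s t → Sat M φ t
  | M, .ann φ ψ, s => Sat (M.restrict (fun t => Sat M φ t)) ψ s

/-- K45: every accessibility relation is transitive and euclidean. -/
def isK45 {A S : Type} (M : Model A S) : Prop :=
  ∀ a : A, (∀ x y z : S, M.R a x y → M.R a y z → M.R a x z) ∧
    (∀ x y z : S, M.R a x y → M.R a x z → M.R a y z)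

/-- KD45: every accessibility relation is transitive, euclidean and serial. -/
def isKD45 {A S : Type} (M : Model A S) : Prop :=
  ∀ a : A, (∀ x y z : S, M.R a x y → M.R a y z → M.R a x z) ∧
    (∀ x y z : S, M.R a x y → M.R a x z → M.R a y z) ∧
    (∀ x : S, ∃ y : S, M.R a x y)

/-- Announcement-free (basic modal) formulas. -/
inductive NoAnn {A : Type} : Form A → Prop
  | atom (n : ℕ) : NoAnn (Form.atom n)
  | neg {φ : Form A} : NoAnn φ → NoAnn (Form.neg φ)
  | conj {φ ψ : Form A} : NoAnn φ → NoAnn ψ → NoAnn (Form.conj φ ψ)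
  | box {a : A} {φ : Form A} : NoAnn φ → NoAnn (Form.box a φ)

/-- Satisfaction in the submodel of M induced by the set D of surviving states
(states, relations and valuation of M restricted to D). The announcement clause
is by state elimination within D (irrelevant here: formulas used are
announcement-free). -/
def SatOn {A S : Type} (M : Model A S) : Set S → Form A → S → Prop
  | _, .atom n, s => M.V n s
  | D, .neg φ, s => ¬ SatOn M D φ s
  | D, .conj φ ψ, s => SatOn M D φ s ∧ SatOn M D ψ s
  | D, .box a φ, s => ∀ t : S, t ∈ D → M.R a s t → SatOn M D φ t
  | D, .ann φ ψ, s => SatOn M {t | t ∈ D ∧ SatOn M D φ t} ψ s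

/-- Iterated truthful (state-elimination) announcement of φ, represented by the
shrinking set of surviving states: M|_{φ^0} has all states, and M|_{φ^{n+1}} is
the restriction of M|_{φ^n} to the states of M|_{φ^n} satisfying φ there. -/
def iterDom {A S : Type} (M : Model A S) (φ : Form A) : ℕ → Set S
  | 0 => Set.univ
  | n + 1 => {t | t ∈ iterDom M φ n ∧ SatOn M (iterDom M φ n) φ t}

inductive St : Type
  | s : St
  | x : ℕ → St
  | z : ℕ → ℕ → St
  deriving DecidableEq

namespace St

def pos : St → ℕ
  | .s => 0
  | .x _ => 1
  | .z _ j => j + 1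

def pairA : St → St
  | .s => .s
  | .x _ => .s
  | .z k j => if 1 ≤ j ∧ j ≤ k then (if j % 2 = 1 then .z k j else .z k (j - 1)) else .z k j

def pairB : St → St
  | .s => .s
  | .x k => .x k
  | .z k j => if 1 ≤ j ∧ j ≤ k then
      (if j = 1 then .x k else if j % 2 = 0 then .z k j else .z k (j - 1))
    else .z k j

def rep : Bool → St → St
  | true, t => pairA t
  | false, t => pairB t

end St

def Mdl : Model Bool St :=
  ⟨fun a t t' => St.rep a t = St.rep a t',
   fun m t => if m = 1 then Even t.pos else
     if m = 2 then (∃ k, t = .x k ∧ Odd k) else False⟩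

def alive : ℕ → St → Prop
  | _, .s => True
  | n, .x k => n ≤ k
  | n, .z k j => n = 0 ∨ (1 ≤ j ∧ j + n ≤ k)

def uF : Form Bool := .atom 1
def qF : Form Bool := .atom 2
def epF : Form Bool := Form.or (.conj uF (.box true uF)) (.conj (.neg uF) (.box false (.neg uF)))
def phiF : Form Bool := .neg epF
def psiF : Form Bool := Form.dia true (.conj qF epF)

lemma Mdl_V1 (t : St) : Mdl.V 1 t ↔ Even t.pos := by simp [Mdl]
lemma Mdl_V2 (t : St) : Mdl.V 2 t ↔ ∃ k, t = .x k ∧ Odd k := by simp [Mdl]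

lemma pairB_z1 (k : ℕ) (hk : 1 ≤ k) : St.pairB (.z k 1) = .x k := by
  simp [St.pairB, hk]

lemma pairA_z_odd (k j : ℕ) (h1 : 1 ≤ j) (h2 : j ≤ k) (h3 : j % 2 = 1) :
    St.pairA (.z k j) = .z k j := by
  simp [St.pairA, h1, h2, h3]

lemma pairA_z_even (k j : ℕ) (h1 : 1 ≤ j) (h2 : j ≤ k) (h3 : j % 2 = 0) :
    St.pairA (.z k j) = .z k (j - 1) := by
  simp [St.pairA, h1, h2] <;> omega

lemma pairB_z_even (k j : ℕ) (h1 : 2 ≤ j) (h2 : j ≤ k) (h3 : j % 2 = 0) :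
    St.pairB (.z k j) = .z k j := by
  have : ¬ (j = 1) := by omega
  simp [St.pairB, h2, h3, this] <;> omega

lemma pairB_z_odd (k j : ℕ) (h1 : 2 ≤ j) (h2 : j ≤ k) (h3 : j % 2 = 1) :
    St.pairB (.z k j) = .z k (j - 1) := by
  have h4 : ¬ (j = 1) := by omega
  have h5 : ¬ (j % 2 = 0) := by omega
  simp [St.pairB, h2, h3, h4, h5] <;> omega

lemma sat_ep (D : Set St) (t : St) : SatOn Mdl D epF t ↔
    ((Even t.pos ∧ ∀ t', t' ∈ D → t.pairA = t'.pairA → Even t'.pos) ∨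
     (¬ Even t.pos ∧ ∀ t', t' ∈ D → t.pairB = t'.pairB → ¬ Even t'.pos)) := by
  have h : SatOn Mdl D epF t ↔
      ¬ (¬ (Mdl.V 1 t ∧ ∀ t', t' ∈ D → St.rep true t = St.rep true t' → Mdl.V 1 t') ∧
         ¬ (¬ Mdl.V 1 t ∧ ∀ t', t' ∈ D → St.rep false t = St.rep false t' → ¬ Mdl.V 1 t')) :=
    Iff.rfl
  rw [h]
  simp only [Mdl_V1, show ∀ t, St.rep true t = t.pairA from fun _ => rfl,
    show ∀ t, St.rep false t = t.pairB from fun _ => rfl]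
  tauto
lemma pairA_eq_zkj {t : St} {k j : ℕ} (hv1 : 1 ≤ j) (hv2 : j ≤ k) (hj : j % 2 = 1)
    (h : t.pairA = .z k j) : t = .z k j ∨ (j + 1 ≤ k ∧ t = .z k (j + 1)) := by
  match t with
  | .s => exact absurd h (by simp [St.pairA])
  | .x k' => exact absurd h (by simp [St.pairA])
  | .z k' j' =>
    simp only [St.pairA] at h
    split_ifs at h with h1 h2
    all_goals
      simp only [St.z.injEq] at h
      obtain ⟨rfl, h⟩ := h
      first
        | exact absurd ⟨by omega, by omega⟩ h1
        | (subst h; exact Or.inl rfl)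
        | (have hj' : j' = j + 1 := by omega
           subst hj'
           exact Or.inr ⟨by omega, rfl⟩)

lemma pairB_eq_zkj {t : St} {k j : ℕ} (hv1 : 2 ≤ j) (hv2 : j ≤ k) (hj : j % 2 = 0)
    (h : t.pairB = .z k j) : t = .z k j ∨ (j + 1 ≤ k ∧ t = .z k (j + 1)) := by
  match t with
  | .s => exact absurd h (by simp [St.pairB])
  | .x k' => exact absurd h (by simp [St.pairB])
  | .z k' j' =>
    simp only [St.pairB] at h
    split_ifs at h with h1 h2 h3
    all_goals
      first
        | exact St.noConfusion h
        | (simp only [St.z.injEq] at h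
           obtain ⟨rfl, h⟩ := h
           first
             | exact absurd ⟨by omega, by omega⟩ h1
             | (subst h; exact Or.inl rfl)
             | (have hj' : j' = j + 1 := by omega
                subst hj'
                exact Or.inr ⟨by omega, rfl⟩))

lemma pairB_eq_xk {t : St} {k : ℕ} (h : t.pairB = .x k) :
    t = .x k ∨ (1 ≤ k ∧ t = .z k 1) := by
  match t with
  | .s => exact absurd h (by simp [St.pairB])
  | .x k' =>
    simp only [St.pairB, St.x.injEq] at h
    subst h; exact Or.inl rfl
  | .z k' j' =>
    simp only [St.pairB] at h
    split_ifs at h with h1 h2 h3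
    all_goals
      first
        | exact St.noConfusion h
        | (simp only [St.x.injEq] at h
           subst h
           exact Or.inr ⟨by omega, by rw [h2]⟩)

lemma pairA_inv_invalid {t : St} {k j : ℕ} (hv : ¬ (1 ≤ j ∧ j ≤ k))
    (h : t.pairA = .z k j) : t = .z k j := by
  match t with
  | .s => exact absurd h (by simp [St.pairA])
  | .x k' => exact absurd h (by simp [St.pairA])
  | .z k' j' =>
    simp only [St.pairA] at h
    split_ifs at h with h1 h2
    all_goals
      first
        | exact h
        | (simp only [St.z.injEq] at h
           obtain ⟨rfl, h⟩ := h
           exact absurd ⟨by omega, by omega⟩ hv)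

lemma pairB_inv_invalid {t : St} {k j : ℕ} (hv : ¬ (1 ≤ j ∧ j ≤ k))
    (h : t.pairB = .z k j) : t = .z k j := by
  match t with
  | .s => exact absurd h (by simp [St.pairB])
  | .x k' => exact absurd h (by simp [St.pairB])
  | .z k' j' =>
    simp only [St.pairB] at h
    split_ifs at h with h1 h2 h3
    all_goals
      first
        | exact St.noConfusion h
        | exact h
        | (simp only [St.z.injEq] at h
           obtain ⟨rfl, h⟩ := h
           exact absurd ⟨by omega, by omega⟩ hv)

lemma pairA_eq_s {t : St} (h : t.pairA = .s) : t = .s ∨ ∃ m, t = .x m := by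
  match t with
  | .s => exact Or.inl rfl
  | .x k' => exact Or.inr ⟨k', rfl⟩
  | .z k' j' =>
    exfalso
    simp only [St.pairA] at h
    split_ifs at h <;> exact absurd h (by simp)

lemma alive_mono {n : ℕ} {t : St} (h : alive (n + 1) t) : alive n t := by
  cases t with
  | s => trivial
  | x k => exact Nat.le_of_succ_le h
  | z k j =>
    rcases h with h | h
    · omega
    · exact Or.inr ⟨h.1, by omega⟩

lemma ep_iff (n : ℕ) (t : St) (ht : alive n t) :
    SatOn Mdl {u | alive n u} epF t ↔ ¬ alive (n + 1) t := by
  rw [sat_ep]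
  cases t with
  | s =>
    simp only [alive, not_true, iff_false]
    rintro (⟨_, hb⟩ | ⟨he, _⟩)
    · have := hb (.x n) (by simp [alive]) rfl
      simp [St.pos, Nat.even_iff] at this
    · exact he (by simp [St.pos])
  | x k =>
    have hpos : St.pos (.x k) = 1 := rfl
    simp only [alive] at ht ⊢
    constructor
    · rintro (⟨he, _⟩ | ⟨_, hb⟩)
      · rw [hpos, Nat.even_iff] at he; omega
      · intro hk1
        have h1k : 1 ≤ k := by omega
        have := hb (.z k 1) (by simp only [Set.mem_setOf_eq, alive]; omega)
          ((pairB_z1 k h1k).symm)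
        rw [show St.pos (.z k 1) = 2 from rfl, Nat.even_iff] at this
        omega
    · intro hk
      right
      refine ⟨by rw [hpos]; simp [Nat.even_iff], ?_⟩
      intro t' ha heq
      rcases pairB_eq_xk (heq.symm.trans rfl) with rfl | ⟨h1k, rfl⟩
      · rw [hpos]; simp [Nat.even_iff]
      · exfalso
        simp only [Set.mem_setOf_eq, alive] at ha
        omega
  | z k j =>
    by_cases hv : 1 ≤ j ∧ j ≤ k
    · have hpos : St.pos (.z k j) = j + 1 := rfl
      rcases Nat.even_or_odd j with hj | hj
      · -- j even (so j ≥ 2): forward relation is b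
        have hj2 : j % 2 = 0 := Nat.even_iff.mp hj
        have h2j : 2 ≤ j := by omega
        have hpB : St.pairB (.z k j) = .z k j := pairB_z_even k j h2j hv.2 hj2
        constructor
        · rintro (⟨he, _⟩ | ⟨_, hb⟩)
          · exfalso; rw [hpos, Nat.even_iff] at he; omega
          · simp only [alive]; intro hcon
            have hj1k : j + 1 ≤ k := by omega
            have hfB : St.pairB (.z k (j + 1)) = .z k j := by
              have := pairB_z_odd k (j + 1) (by omega) hj1k (by omega)
              simpa using this
            have := hb (.z k (j + 1))
              (by simp only [Set.mem_setOf_eq, alive]; omega)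
              (hpB.trans hfB.symm)
            rw [show St.pos (.z k (j + 1)) = j + 2 from rfl, Nat.even_iff] at this
            omega
        · intro hdie
          simp only [alive] at hdie
          right
          refine ⟨by rw [hpos, Nat.even_iff]; omega, ?_⟩
          intro t' ha heq
          rcases pairB_eq_zkj h2j hv.2 hj2 (heq.symm.trans hpB) with rfl | ⟨hjk, rfl⟩
          · rw [hpos, Nat.even_iff]; omega
          · exfalso
            simp only [Set.mem_setOf_eq, alive] at ha
            omega
      · -- j odd: forward relation is a
        have hj2 : j % 2 = 1 := Nat.odd_iff.mp hj
        have hpA : St.pairA (.z k j) = .z k j := pairA_z_odd k j hv.1 hv.2 hj2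
        constructor
        · rintro (⟨_, hb⟩ | ⟨hne, _⟩)
          · simp only [alive]; intro hcon
            have hj1k : j + 1 ≤ k := by omega
            have hfA : St.pairA (.z k (j + 1)) = .z k j := by
              have := pairA_z_even k (j + 1) (by omega) hj1k (by omega)
              simpa using this
            have := hb (.z k (j + 1))
              (by simp only [Set.mem_setOf_eq, alive]; omega)
              (hpA.trans hfA.symm)
            rw [show St.pos (.z k (j + 1)) = j + 2 from rfl, Nat.even_iff] at this
            omega
          · exact absurd (by rw [hpos, Nat.even_iff]; omega) hne
        · intro hdie
          simp only [alive] at hdie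
          left
          refine ⟨by rw [hpos, Nat.even_iff]; omega, ?_⟩
          intro t' ha heq
          rcases pairA_eq_zkj hv.1 hv.2 hj2 (heq.symm.trans hpA) with rfl | ⟨hjk, rfl⟩
          · rw [hpos, Nat.even_iff]; omega
          · exfalso
            simp only [Set.mem_setOf_eq, alive] at ha
            omega
    · -- invalid chain state: isolated, always an endpoint, only alive at n = 0
      have hn0 : n = 0 := by
        rcases ht with h | h
        · exact h
        · exact absurd ⟨h.1, by omega⟩ hv
      subst hn0
      have hrhs : ¬ alive (0 + 1) (.z k j) := by
        simp only [alive]; omega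
      constructor
      · intro _; exact hrhs
      · intro _
        rcases Nat.even_or_odd (St.pos (.z k j)) with he | he
        · left
          refine ⟨he, ?_⟩
          intro t' _ heq
          rw [pairA_inv_invalid hv (heq.symm.trans (by simp [St.pairA, hv]))]
          exact he
        · right
          refine ⟨by rw [Nat.even_iff]; rw [Nat.odd_iff] at he; omega, ?_⟩
          intro t' _ heq
          rw [pairB_inv_invalid hv (heq.symm.trans (by simp [St.pairB, hv]))]
          rw [Nat.even_iff]; rw [Nat.odd_iff] at he; omega

lemma satOn_phi (D : Set St) (t : St) :
    SatOn Mdl D phiF t ↔ ¬ SatOn Mdl D epF t := Iff.rfl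

lemma dom_eq (n : ℕ) : iterDom Mdl phiF n = {t | alive n t} := by
  induction n with
  | zero =>
    ext t
    simp only [iterDom, Set.mem_univ, Set.mem_setOf_eq, true_iff]
    cases t with
    | s => trivial
    | x k => exact Nat.zero_le k
    | z k j => exact Or.inl rfl
  | succ n ih =>
    ext t
    simp only [iterDom, ih, Set.mem_setOf_eq]
    constructor
    · rintro ⟨ha, hφ⟩
      have hφ' : ¬ SatOn Mdl {t | alive n t} epF t := (satOn_phi _ _).mp hφ
      rw [ep_iff n t ha] at hφ'
      exact not_not.mp hφ'
    · intro h
      have ha := alive_mono h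
      refine ⟨ha, (satOn_phi _ _).mpr ?_⟩
      rw [ep_iff n t ha]
      exact not_not_intro h

/-- Iterated truthful announcement need not stabilize other formulas on S5:
there are a two-agent S5 model (both relations are equivalence relations) and
announcement-free formulas φ and ψ such that for every n, the designated state s
survives in M|_{φ^n}, φ is true at s in M|_{φ^n} (each announcement of φ is
truthful), and ψ is true at s in M|_{φ^n} iff n is odd. -/
theorem iterated_truthful_announcement_unstable_on_S5 :
    ∃ (S : Type) (M : Model Bool S) (s : S) (φ ψ : Form Bool),
      NoAnn φ ∧ NoAnn ψ ∧
      (∀ a : Bool, Equivalence (M.R a)) ∧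
      ∀ n : ℕ,
        s ∈ iterDom M φ n ∧
        SatOn M (iterDom M φ n) φ s ∧
        (SatOn M (iterDom M φ n) ψ s ↔ Odd n) := by
  refine ⟨St, Mdl, .s, phiF, psiF, ?_, ?_, ?_, ?_⟩
  · unfold phiF epF uF Form.or
    repeat constructor
  · unfold psiF epF uF qF Form.dia Form.or
    repeat constructor
  · intro a
    exact ⟨fun _ => rfl, Eq.symm, Eq.trans⟩
  · intro n
    rw [dom_eq]
    refine ⟨trivial, ?_, ?_⟩
    · rw [satOn_phi, ep_iff n .s trivial]
      exact not_not_intro trivial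
    · have hpsi : SatOn Mdl {t | alive n t} psiF .s ↔
          ¬ ∀ t' : St, t' ∈ {t | alive n t} → Mdl.R true .s t' →
            ¬ (Mdl.V 2 t' ∧ SatOn Mdl {t | alive n t} epF t') := Iff.rfl
      rw [hpsi]
      constructor
      · intro h
        push_neg at h
        obtain ⟨t', ha, hrel, hq, hep⟩ := h
        obtain ⟨m, rfl, hm⟩ := (Mdl_V2 t').mp hq
        have ha' : alive n (St.x m) := ha
        have hdie := (ep_iff n _ ha').mp hep
        simp only [Set.mem_setOf_eq, alive] at ha
        simp only [alive] at hdie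
        rw [Nat.odd_iff] at hm ⊢
        omega
      · intro hodd h
        exact h (.x n) (show alive n (St.x n) from le_refl n) rfl
          ⟨(Mdl_V2 _).mpr ⟨n, rfl, hodd⟩,
           (ep_iff n (.x n) (le_refl n)).mpr (by simp only [alive]; omega)⟩
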